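/- arXiv:2204.09266 — 2 statements merged into one kernel-verified Lean document; each statement's English description precedes it below -/
import Mathlib

section
/- Let f : ℝ^d → ℝ be twice continuously differentiable with λmin·I ⪯ ∇²f(x) ⪯ λmax·I for all x and L-Lipschitz Hessian, with unique minimizer x*, and let β ∈ (0,1/2). Suppose x ∈ N_ν, H̃ is a symmetric matrix with (1-ψ)H(x) ⪯ H̃ ⪯ (1+ψ)H(x), and p = -H̃⁻¹∇f(x), where 0 < ν ≤ (2/3)(1/2 - β) and 0 < ψ ≤ (1/2 - β)/(3/2 - β). Then ‖x + p - x*‖_{H*} ≤ 3·{ (L/λmin^{3/2})·‖x - x*‖²_{H*} + ‖I - H(x)^{-1/2} H̃ H(x)^{-1/2}‖ · ‖x - x*‖_{H*} }. -/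
open Real
open scoped BigOperators Matrix

open scoped ComplexOrder in
/-- Square root of a positive semidefinite matrix (removed from Mathlib; old definition). -/
noncomputable def Matrix.PosSemidef.sqrt {n 𝕜 : Type*} [Fintype n] [RCLike 𝕜] [DecidableEq n]
    {A : Matrix n n 𝕜} (hA : A.PosSemidef) : Matrix n n 𝕜 :=
  hA.1.eigenvectorUnitary.1 * Matrix.diagonal ((↑) ∘ (√·) ∘ hA.1.eigenvalues) *
    (star hA.1.eigenvectorUnitary : Matrix n n 𝕜)

/-- Spectral norm (ℓ₂ operator norm) of a real matrix. -/
noncomputable def specNorm {d : ℕ} (A : Matrix (Fin d) (Fin d) ℝ) : ℝ :=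
  ‖Matrix.toEuclideanCLM (𝕜 := ℝ) A‖

/-- Euclidean (ℓ₂) norm of a vector. -/
noncomputable def vnorm {d : ℕ} (v : Fin d → ℝ) : ℝ := Real.sqrt (∑ i, v i ^ 2)

/-- The norm ‖v‖_A = √(vᵀAv) induced by a positive semidefinite matrix A. -/
noncomputable def Mnorm {d : ℕ} (A : Matrix (Fin d) (Fin d) ℝ) (v : Fin d → ℝ) : ℝ :=
  Real.sqrt (dotProduct v (A.mulVec v))

variable {d : ℕ}

abbrev Evec (d : ℕ) := EuclideanSpace ℝ (Fin d)

noncomputable def toE : (Fin d → ℝ) ≃ Evec d := (WithLp.equiv 2 (Fin d → ℝ)).symm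

noncomputable def eqE : EuclideanSpace ℝ (Fin d) ≃L[ℝ] (Fin d → ℝ) :=
  EuclideanSpace.equiv (Fin d) ℝ

lemma eqE_toE (v : Fin d → ℝ) : eqE (toE v) = v := rfl
lemma toE_eqE (y : EuclideanSpace ℝ (Fin d)) : toE (eqE y) = y := rfl

lemma vnorm_eq (v : Fin d → ℝ) : vnorm v = ‖toE v‖ := by
  rw [EuclideanSpace.norm_eq]
  simp [vnorm, toE, Real.norm_eq_abs, sq_abs]

lemma dot_eq_inner (v w : Fin d → ℝ) :
    dotProduct v w = (inner ℝ (toE v) (toE w) : ℝ) := by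
  simp [toE, PiLp.inner_apply, dotProduct, RCLike.inner_apply, mul_comm]

lemma mulVec_toE (A : Matrix (Fin d) (Fin d) ℝ) (v : Fin d → ℝ) :
    toE (A.mulVec v) = Matrix.toEuclideanCLM (𝕜 := ℝ) A (toE v) := by
  rfl

lemma vnorm_mulVec_le (A : Matrix (Fin d) (Fin d) ℝ) (v : Fin d → ℝ) :
    vnorm (A.mulVec v) ≤ specNorm A * vnorm v := by
  rw [vnorm_eq, vnorm_eq, mulVec_toE]
  exact (Matrix.toEuclideanCLM (𝕜 := ℝ) A).le_opNorm _

lemma toE_add (v w : Fin d → ℝ) : toE (v + w) = toE v + toE w := rfl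
lemma toE_sub (v w : Fin d → ℝ) : toE (v - w) = toE v - toE w := rfl
lemma toE_zero : toE (0 : Fin d → ℝ) = 0 := rfl

lemma vnorm_nonneg (v : Fin d → ℝ) : 0 ≤ vnorm v := Real.sqrt_nonneg _

lemma dot_self_eq (v : Fin d → ℝ) : dotProduct v v = vnorm v ^ 2 := by
  rw [vnorm_eq, dot_eq_inner, real_inner_self_eq_norm_sq]

lemma psd_dot_nonneg {A : Matrix (Fin d) (Fin d) ℝ} (hA : A.PosSemidef) (v : Fin d → ℝ) :
    0 ≤ dotProduct v (A.mulVec v) := by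
  simpa using hA.dotProduct_mulVec_nonneg v

lemma dot_le_of_psd {A B : Matrix (Fin d) (Fin d) ℝ} (h : (B - A).PosSemidef) (v : Fin d → ℝ) :
    dotProduct v (A.mulVec v) ≤ dotProduct v (B.mulVec v) := by
  have := psd_dot_nonneg h v
  rw [Matrix.sub_mulVec, dotProduct_sub] at this
  linarith

lemma Mnorm_nonneg (A : Matrix (Fin d) (Fin d) ℝ) (v : Fin d → ℝ) : 0 ≤ Mnorm A v :=
  Real.sqrt_nonneg _

lemma Mnorm_le_of_psd {A B : Matrix (Fin d) (Fin d) ℝ} (h : (B - A).PosSemidef) (v : Fin d → ℝ) :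
    Mnorm A v ≤ Mnorm B v :=
  Real.sqrt_le_sqrt (dot_le_of_psd h v)

lemma symm_transpose {A : Matrix (Fin d) (Fin d) ℝ} (hA : Aᴴ = A) : Aᵀ = A := by
  ext i j
  have := congrFun (congrFun hA i) j
  simpa [Matrix.conjTranspose_apply] using this

lemma symm_dot_mulVec {A : Matrix (Fin d) (Fin d) ℝ} (hA : Aᴴ = A) (v w : Fin d → ℝ) :
    dotProduct v (A.mulVec w) = dotProduct (A.mulVec v) w := by
  rw [Matrix.dotProduct_mulVec]
  congr 1
  rw [← Matrix.mulVec_transpose, symm_transpose hA]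

lemma Matrix.PosSemidef.sqrt_mul_self {A : Matrix (Fin d) (Fin d) ℝ} (hA : A.PosSemidef) :
    hA.sqrt * hA.sqrt = A := by
  have hU : star (hA.1.eigenvectorUnitary : Matrix (Fin d) (Fin d) ℝ) * hA.1.eigenvectorUnitary = 1 :=
    Unitary.coe_star_mul_self _
  conv_rhs => rw [hA.1.spectral_theorem, Unitary.conjStarAlgAut_apply]
  unfold Matrix.PosSemidef.sqrt
  set U : Matrix (Fin d) (Fin d) ℝ := (hA.1.eigenvectorUnitary : Matrix (Fin d) (Fin d) ℝ)
  calc U * Matrix.diagonal ((↑) ∘ (√·) ∘ hA.1.eigenvalues) * star U *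
        (U * Matrix.diagonal ((↑) ∘ (√·) ∘ hA.1.eigenvalues) * star U)
      = U * (Matrix.diagonal ((↑) ∘ (√·) ∘ hA.1.eigenvalues) * (star U * U) *
        Matrix.diagonal ((↑) ∘ (√·) ∘ hA.1.eigenvalues)) * star U := by noncomm_ring
    _ = _ := by
      rw [hU, mul_one, Matrix.diagonal_mul_diagonal]
      congr 3
      funext i
      simp [Real.mul_self_sqrt (hA.eigenvalues_nonneg i)]

lemma Matrix.PosSemidef.posSemidef_sqrt {A : Matrix (Fin d) (Fin d) ℝ} (hA : A.PosSemidef) :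
    hA.sqrt.PosSemidef := by
  unfold Matrix.PosSemidef.sqrt
  have h := (Matrix.PosSemidef.diagonal (R := ℝ) (n := Fin d)
    (d := ((↑) ∘ (√·) ∘ hA.1.eigenvalues)) (fun i => by simp [Real.sqrt_nonneg])).mul_mul_conjTranspose_same
    (hA.1.eigenvectorUnitary : Matrix (Fin d) (Fin d) ℝ)
  exact h

lemma Mnorm_eq_vnorm_sqrt {A : Matrix (Fin d) (Fin d) ℝ} (hA : A.PosSemidef) (v : Fin d → ℝ) :
    Mnorm A v = vnorm (hA.sqrt.mulVec v) := by
  have hs : hA.sqrt * hA.sqrt = A := hA.sqrt_mul_self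
  have hherm : hA.sqrtᴴ = hA.sqrt := hA.posSemidef_sqrt.1
  have key : dotProduct v ((hA.sqrt * hA.sqrt).mulVec v)
      = dotProduct (hA.sqrt.mulVec v) (hA.sqrt.mulVec v) := by
    rw [← Matrix.mulVec_mulVec, symm_dot_mulVec hherm]
  rw [hs] at key
  rw [Mnorm, key, dot_self_eq, Real.sqrt_sq (vnorm_nonneg _)]

lemma Mnorm_sq {A : Matrix (Fin d) (Fin d) ℝ} (hA : A.PosSemidef) (v : Fin d → ℝ) :
    Mnorm A v ^ 2 = dotProduct v (A.mulVec v) :=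
  Real.sq_sqrt (psd_dot_nonneg hA v)

lemma dot_le_vnorm_mul (v w : Fin d → ℝ) :
    dotProduct v w ≤ vnorm v * vnorm w := by
  rw [dot_eq_inner, vnorm_eq, vnorm_eq]
  exact real_inner_le_norm _ _

lemma dot_abs_le (B : Matrix (Fin d) (Fin d) ℝ) (v : Fin d → ℝ) :
    |dotProduct v (B.mulVec v)| ≤ specNorm B * vnorm v ^ 2 := by
  rw [dot_eq_inner, mulVec_toE]
  calc |(inner ℝ (toE v) (Matrix.toEuclideanCLM (𝕜 := ℝ) B (toE v)) : ℝ)|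
      ≤ ‖toE v‖ * ‖Matrix.toEuclideanCLM (𝕜 := ℝ) B (toE v)‖ := abs_real_inner_le_norm _ _
    _ ≤ ‖toE v‖ * (specNorm B * ‖toE v‖) := by
        gcongr; exact (Matrix.toEuclideanCLM (𝕜 := ℝ) B).le_opNorm _
    _ = specNorm B * vnorm v ^ 2 := by rw [vnorm_eq]; ring

lemma quad_lower {A : Matrix (Fin d) (Fin d) ℝ} {c : ℝ}
    (h : (A - c • (1 : Matrix (Fin d) (Fin d) ℝ)).PosSemidef) (v : Fin d → ℝ) :
    c * vnorm v ^ 2 ≤ dotProduct v (A.mulVec v) := by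
  have := dot_le_of_psd h v
  rwa [Matrix.smul_mulVec, Matrix.one_mulVec, dotProduct_smul, smul_eq_mul,
    dot_self_eq] at this

lemma vnorm_mulVec_lower {A : Matrix (Fin d) (Fin d) ℝ} {c : ℝ} (hc : 0 ≤ c)
    (h : (A - c • (1 : Matrix (Fin d) (Fin d) ℝ)).PosSemidef) (v : Fin d → ℝ) :
    c * vnorm v ≤ vnorm (A.mulVec v) := by
  rcases eq_or_lt_of_le (vnorm_nonneg v) with h0 | h0
  · rw [← h0, mul_zero]; exact vnorm_nonneg _
  · have h1 : c * vnorm v ^ 2 ≤ vnorm v * vnorm (A.mulVec v) :=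
      (quad_lower h v).trans (dot_le_vnorm_mul _ _)
    nlinarith

lemma herm_of_isSymm {A : Matrix (Fin d) (Fin d) ℝ} (h : A.IsSymm) : Aᴴ = A := by
  ext i j
  have h2 : A j i = A i j := by
    have h3 := congrFun (congrFun h j) i
    rw [Matrix.transpose_apply] at h3
    exact h3.symm
  simp [Matrix.conjTranspose_apply, h2]

lemma dot_mulVec_abs_le (B : Matrix (Fin d) (Fin d) ℝ) (v w : Fin d → ℝ) :
    |dotProduct v (B.mulVec w)| ≤ specNorm B * vnorm v * vnorm w := by
  rw [dot_eq_inner, mulVec_toE]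
  calc |(inner ℝ (toE v) (Matrix.toEuclideanCLM (𝕜 := ℝ) B (toE w)) : ℝ)|
      ≤ ‖toE v‖ * ‖Matrix.toEuclideanCLM (𝕜 := ℝ) B (toE w)‖ := abs_real_inner_le_norm _ _
    _ ≤ ‖toE v‖ * (specNorm B * ‖toE w‖) := by
        gcongr; exact (Matrix.toEuclideanCLM (𝕜 := ℝ) B).le_opNorm _
    _ = specNorm B * vnorm v * vnorm w := by rw [vnorm_eq, vnorm_eq]; ring

lemma grad_taylor
    (f : (Fin d → ℝ) → ℝ) (g : (Fin d → ℝ) → Fin d → ℝ)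
    (H : (Fin d → ℝ) → Matrix (Fin d) (Fin d) ℝ) (L : ℝ) (hL : 0 ≤ L)
    (hf : ContDiff ℝ 2 f)
    (hgrad : ∀ y v, fderiv ℝ f y v = dotProduct (g y) v)
    (hhess : ∀ y u v, fderiv ℝ (fun z => fderiv ℝ f z v) y u =
      dotProduct u ((H y).mulVec v))
    (hHsym : ∀ y, (H y).IsSymm)
    (hLip : ∀ y z, specNorm (H y - H z) ≤ L * vnorm (y - z))
    (xstar x : Fin d → ℝ) (hgstar : g xstar = 0) :
    vnorm (g x - (H x).mulVec (x - xstar)) ≤ L * vnorm (x - xstar) ^ 2 := by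
  classical
  have h1 : ContDiff ℝ 1 (fderiv ℝ f) := hf.fderiv_right (by norm_num)
  have hd1 : Differentiable ℝ (fderiv ℝ f) := h1.differentiable one_ne_zero
  have hsecond : ∀ z u v, (fderiv ℝ (fderiv ℝ f) z u) v =
      dotProduct u ((H z).mulVec v) := by
    intro z u v
    rw [← hhess z u v]
    rw [fderiv_clm_apply (hd1 z) (differentiableAt_const v)]
    simp
  set w : Fin d → ℝ := g x - (H x).mulVec (x - xstar) with hw
  set c₀ : EuclideanSpace ℝ (Fin d) := toE ((H x).mulVec w) with hc₀
  have hinner_fun : (fun y : EuclideanSpace ℝ (Fin d) => (inner ℝ c₀ y : ℝ))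
      = fun y => (innerSL ℝ c₀) y := rfl
  set φ : EuclideanSpace ℝ (Fin d) → ℝ :=
    fun y => fderiv ℝ f (eqE y) w - (inner ℝ c₀ y : ℝ) with hφ
  have hcdiff : Differentiable ℝ (fun y : EuclideanSpace ℝ (Fin d) => fderiv ℝ f (eqE y)) :=
    hd1.comp eqE.differentiable
  have hpart1 : Differentiable ℝ (fun y : EuclideanSpace ℝ (Fin d) => fderiv ℝ f (eqE y) w) :=
    hcdiff.clm_apply (differentiable_const w)
  have hpart2 : Differentiable ℝ (fun y : EuclideanSpace ℝ (Fin d) => (inner ℝ c₀ y : ℝ)) := by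
    rw [hinner_fun]; exact (innerSL ℝ c₀).differentiable
  have hφd : Differentiable ℝ φ := hpart1.sub hpart2
  -- the derivative formula
  have hφderiv : ∀ y u, fderiv ℝ φ y u =
      dotProduct (eqE u) (((H (eqE y)) - (H x)).mulVec w) := by
    intro y u
    have e1 : fderiv ℝ (fun y : EuclideanSpace ℝ (Fin d) => fderiv ℝ f (eqE y) w) y u
        = (fderiv ℝ (fderiv ℝ f) (eqE y) (eqE u)) w := by
      rw [fderiv_clm_apply (hcdiff y) (differentiableAt_const w)]
      simp only [ContinuousLinearMap.add_apply, ContinuousLinearMap.comp_apply,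
        fderiv_const, Pi.zero_apply, ContinuousLinearMap.zero_apply,
        ContinuousLinearMap.flip_apply]
      have : fderiv ℝ (fun y : EuclideanSpace ℝ (Fin d) => fderiv ℝ f (eqE y)) y
          = (fderiv ℝ (fderiv ℝ f) (eqE y)).comp
            ((eqE : EuclideanSpace ℝ (Fin d) ≃L[ℝ] (Fin d → ℝ)) :
              EuclideanSpace ℝ (Fin d) →L[ℝ] (Fin d → ℝ)) := by
        have := fderiv_comp y (hd1 (eqE y)) eqE.differentiableAt
        simpa [Function.comp_def, eqE.fderiv] using this
      rw [this]
      simp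
    have e2 : fderiv ℝ (fun y : EuclideanSpace ℝ (Fin d) => (inner ℝ c₀ y : ℝ)) y u
        = (inner ℝ c₀ u : ℝ) := by
      rw [hinner_fun, (innerSL ℝ c₀).fderiv]; simp
    have e3 : (inner ℝ c₀ u : ℝ) = dotProduct (eqE u) ((H x).mulVec w) := by
      conv_lhs => rw [hc₀, ← toE_eqE u]
      rw [← dot_eq_inner, dotProduct_comm]
    rw [hφ, fderiv_fun_sub (hpart1 y) (hpart2 y), ContinuousLinearMap.sub_apply, e1, e2,
      hsecond, Matrix.sub_mulVec, dotProduct_sub, e3]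
  -- bound on the derivative over the segment
  set sgm : Set (EuclideanSpace ℝ (Fin d)) := segment ℝ (toE xstar) (toE x) with hsgm
  have hvnorm_sub : ∀ y : EuclideanSpace ℝ (Fin d), vnorm (eqE y - x) = ‖y - toE x‖ := by
    intro y
    rw [vnorm_eq, toE_sub, toE_eqE]
  have hvnorm_e : vnorm (x - xstar) = ‖toE x - toE xstar‖ := by rw [vnorm_eq, toE_sub]
  have hbound : ∀ y ∈ sgm, ‖fderiv ℝ φ y‖ ≤ L * vnorm (x - xstar) * vnorm w := by
    intro y hy
    have hyx : vnorm (eqE y - x) ≤ vnorm (x - xstar) := by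
      obtain ⟨a, b, ha, hb, hab, hy⟩ := hy
      have hdiff : y - toE x = a • (toE xstar - toE x) := by
        rw [← hy]
        have hb1 : b = 1 - a := by linarith
        rw [hb1]
        module
      rw [hvnorm_sub, hdiff, norm_smul, hvnorm_e]
      calc ‖a‖ * ‖toE xstar - toE x‖ ≤ 1 * ‖toE xstar - toE x‖ := by
            apply mul_le_mul_of_nonneg_right _ (norm_nonneg _)
            rw [Real.norm_eq_abs, abs_of_nonneg ha]; linarith
        _ = ‖toE xstar - toE x‖ := one_mul _
        _ = ‖toE x - toE xstar‖ := norm_sub_rev _ _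
    apply ContinuousLinearMap.opNorm_le_bound _
      (mul_nonneg (mul_nonneg hL (vnorm_nonneg _)) (vnorm_nonneg _))
    intro u
    rw [hφderiv y u, Real.norm_eq_abs]
    have huE : vnorm (eqE u) = ‖u‖ := by rw [vnorm_eq, toE_eqE]
    calc |dotProduct (eqE u) (((H (eqE y)) - (H x)).mulVec w)|
        ≤ specNorm (H (eqE y) - H x) * vnorm (eqE u) * vnorm w :=
          dot_mulVec_abs_le _ _ _
      _ ≤ (L * vnorm (x - xstar)) * vnorm (eqE u) * vnorm w := by
          apply mul_le_mul_of_nonneg_right _ (vnorm_nonneg _)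
          apply mul_le_mul_of_nonneg_right _ (vnorm_nonneg _)
          exact (hLip (eqE y) x).trans (by
            apply mul_le_mul_of_nonneg_left hyx hL)
      _ = L * vnorm (x - xstar) * vnorm w * vnorm (eqE u) := by ring
      _ = L * vnorm (x - xstar) * vnorm w * ‖u‖ := by rw [huE]
  have hmvt := (convex_segment (toE xstar) (toE x)).norm_image_sub_le_of_norm_fderiv_le
    (fun y _ => hφd y) hbound (left_mem_segment ℝ _ _) (right_mem_segment ℝ _ _)
  -- evaluate φ at the endpoints
  have hval : φ (toE x) - φ (toE xstar) = vnorm w ^ 2 := by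
    have hx1 : φ (toE x) = dotProduct (g x) w - dotProduct ((H x).mulVec w) x := by
      simp only [hφ, hc₀]
      rw [eqE_toE, hgrad, ← dot_eq_inner]
    have hx2 : φ (toE xstar) = - dotProduct ((H x).mulVec w) xstar := by
      simp only [hφ, hc₀]
      rw [eqE_toE, hgrad, hgstar, zero_dotProduct, ← dot_eq_inner]
      ring
    have h4 : dotProduct ((H x).mulVec w) x - dotProduct ((H x).mulVec w) xstar
        = dotProduct ((H x).mulVec (x - xstar)) w := by
      rw [← dotProduct_sub, dotProduct_comm,
        symm_dot_mulVec (herm_of_isSymm (hHsym x))]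
    have key : dotProduct w w = dotProduct (g x) w -
        dotProduct ((H x).mulVec (x - xstar)) w := by
      conv_lhs => rw [hw]
      rw [sub_dotProduct]
    rw [hx1, hx2, ← dot_self_eq, key]
    linarith [h4]
  -- conclude
  have hfin : vnorm w ^ 2 ≤ L * vnorm (x - xstar) * vnorm w * vnorm (x - xstar) := by
    have h5 : vnorm w ^ 2 ≤ ‖φ (toE x) - φ (toE xstar)‖ := by
      rw [← hval]; exact le_abs_self _
    calc vnorm w ^ 2 ≤ ‖φ (toE x) - φ (toE xstar)‖ := h5
      _ ≤ L * vnorm (x - xstar) * vnorm w * ‖toE x - toE xstar‖ := hmvt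
      _ = L * vnorm (x - xstar) * vnorm w * vnorm (x - xstar) := by rw [← hvnorm_e]
  rcases eq_or_lt_of_le (vnorm_nonneg w) with h0 | h0
  · rw [← h0]
    have : 0 ≤ L * vnorm (x - xstar) ^ 2 := mul_nonneg hL (sq_nonneg _)
    linarith
  · nlinarith [hfin, h0]

lemma vnorm_sub_rev (v w : Fin d → ℝ) : vnorm (v - w) = vnorm (w - v) := by
  rw [vnorm_eq, vnorm_eq, toE_sub, toE_sub, norm_sub_rev]

lemma vnorm_add_le (v w : Fin d → ℝ) : vnorm (v + w) ≤ vnorm v + vnorm w := by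
  rw [vnorm_eq, vnorm_eq, vnorm_eq, toE_add]
  exact norm_add_le _ _

lemma specNorm_nonneg (B : Matrix (Fin d) (Fin d) ℝ) : 0 ≤ specNorm B := norm_nonneg _

lemma specNorm_neg (B : Matrix (Fin d) (Fin d) ℝ) : specNorm (-B) = specNorm B := by
  unfold specNorm
  rw [map_neg, norm_neg]

lemma psd_of_quad {B : Matrix (Fin d) (Fin d) ℝ} (hherm : Bᴴ = B)
    (h : ∀ v, 0 ≤ dotProduct v (B.mulVec v)) : B.PosSemidef :=
  Matrix.PosSemidef.of_dotProduct_mulVec_nonneg hherm (fun v => by simpa using h v)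

lemma quad_smul (c : ℝ) (B : Matrix (Fin d) (Fin d) ℝ) (v : Fin d → ℝ) :
    dotProduct v ((c • B).mulVec v) = c * dotProduct v (B.mulVec v) := by
  rw [Matrix.smul_mulVec, dotProduct_smul, smul_eq_mul]

lemma quad_sub (B C : Matrix (Fin d) (Fin d) ℝ) (v : Fin d → ℝ) :
    dotProduct v ((B - C).mulVec v)
      = dotProduct v (B.mulVec v) - dotProduct v (C.mulVec v) := by
  rw [Matrix.sub_mulVec, dotProduct_sub]

lemma quad_smul_one (c : ℝ) (v : Fin d → ℝ) :
    dotProduct v ((c • (1 : Matrix (Fin d) (Fin d) ℝ)).mulVec v) = c * vnorm v ^ 2 := by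
  rw [quad_smul, Matrix.one_mulVec, dot_self_eq]

lemma posdef_of_lower {B : Matrix (Fin d) (Fin d) ℝ} {c : ℝ} (hc : 0 < c)
    (h : (B - c • (1 : Matrix (Fin d) (Fin d) ℝ)).PosSemidef) : B.PosDef := by
  have hherm : Bᴴ = B := by
    have h1 := h.1
    unfold Matrix.IsHermitian at h1
    have h2 : (c • (1 : Matrix (Fin d) (Fin d) ℝ))ᴴ = c • 1 := by simp
    rw [Matrix.conjTranspose_sub, h2] at h1
    have := congrArg (· + c • (1 : Matrix (Fin d) (Fin d) ℝ)) h1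
    simpa using this
  refine Matrix.PosDef.of_dotProduct_mulVec_pos hherm (fun v hv => ?_)
  have h1 : c * vnorm v ^ 2 ≤ dotProduct v (B.mulVec v) := quad_lower h v
  have h2 : 0 < vnorm v := by
    rw [vnorm_eq]
    have : toE v ≠ 0 := fun hz => hv (by simpa [toE] using congrArg (eqE (d := d)) hz)
    exact norm_pos_iff.mpr this
  have : 0 < dotProduct v (B.mulVec v) := lt_of_lt_of_le (by positivity) h1
  simpa using this

lemma Mnorm_sq_le_close {A B : Matrix (Fin d) (Fin d) ℝ} {lmin δ : ℝ}
    (hlmin : 0 < lmin) (hδ : 0 ≤ δ)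
    (hA : A.PosSemidef) (hB : B.PosSemidef)
    (hAl : (A - lmin • (1 : Matrix (Fin d) (Fin d) ℝ)).PosSemidef)
    (hd : specNorm (B - A) ≤ δ) (t : Fin d → ℝ) :
    Mnorm B t ^ 2 ≤ (1 + δ / lmin) * Mnorm A t ^ 2 := by
  have h1 : dotProduct t (B.mulVec t)
      = dotProduct t (A.mulVec t) + dotProduct t ((B - A).mulVec t) := by
    rw [quad_sub]; ring
  have h2 : dotProduct t ((B - A).mulVec t) ≤ δ * vnorm t ^ 2 := by
    refine (le_abs_self _).trans ((dot_abs_le _ _).trans ?_)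
    exact mul_le_mul_of_nonneg_right hd (sq_nonneg _)
  have h3 : lmin * vnorm t ^ 2 ≤ dotProduct t (A.mulVec t) := quad_lower hAl t
  have h4 : (δ / lmin) * (lmin * vnorm t ^ 2) ≤ (δ / lmin) * dotProduct t (A.mulVec t) :=
    mul_le_mul_of_nonneg_left h3 (div_nonneg hδ hlmin.le)
  have h5 : (δ / lmin) * (lmin * vnorm t ^ 2) = δ * vnorm t ^ 2 := by
    field_simp
  rw [Mnorm_sq hB, Mnorm_sq hA, h1]
  linarith

lemma gstar_zero (f : (Fin d → ℝ) → ℝ) (g : (Fin d → ℝ) → Fin d → ℝ)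
    (hf : ContDiff ℝ 2 f)
    (hgrad : ∀ y v, fderiv ℝ f y v = dotProduct (g y) v)
    (xstar : Fin d → ℝ) (hmin : ∀ y, f xstar ≤ f y) : g xstar = 0 := by
  have hloc : IsLocalMin f xstar := Filter.Eventually.of_forall hmin
  have h0 : fderiv ℝ f xstar = 0 := hloc.fderiv_eq_zero
  have h1 : dotProduct (g xstar) (g xstar) = 0 := by
    rw [← hgrad, h0]; rfl
  rw [dot_self_eq, pow_eq_zero_iff (by norm_num)] at h1
  rw [vnorm_eq, norm_eq_zero] at h1
  have := congrArg (eqE (d := d)) h1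
  simpa [toE] using this

set_option maxHeartbeats 1000000 in
/-- Lemma 6 in the paper: the linear–quadratic error recursion for the
Newton step with an approximate Hessian. -/
theorem stmt7
    {d : ℕ} (f : (Fin d → ℝ) → ℝ) (g : (Fin d → ℝ) → Fin d → ℝ)
    (H : (Fin d → ℝ) → Matrix (Fin d) (Fin d) ℝ)
    (lmin lmax L : ℝ) (hlmin : 0 < lmin) (hlle : lmin ≤ lmax) (hL : 0 < L)
    (hf : ContDiff ℝ 2 f)
    (hgrad : ∀ y v, fderiv ℝ f y v = dotProduct (g y) v)
    (hhess : ∀ y u v, fderiv ℝ (fun z => fderiv ℝ f z v) y u =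
      dotProduct u ((H y).mulVec v))
    (hHsym : ∀ y, (H y).IsSymm)
    (hpsd : ∀ y, (H y).PosSemidef)
    (hlow : ∀ y, (H y - lmin • (1 : Matrix (Fin d) (Fin d) ℝ)).PosSemidef)
    (hup : ∀ y, (lmax • (1 : Matrix (Fin d) (Fin d) ℝ) - H y).PosSemidef)
    (hLip : ∀ y z, specNorm (H y - H z) ≤ L * vnorm (y - z))
    (xstar : Fin d → ℝ) (hmin : ∀ y, f xstar ≤ f y)
    (huniq : ∀ y, (∀ z, f y ≤ f z) → y = xstar)
    (β ν ψ : ℝ) (hβ0 : 0 < β) (hβ : β < 1 / 2)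
    (hν0 : 0 < ν) (hν : ν ≤ (2 / 3) * (1 / 2 - β))
    (hψ0 : 0 < ψ) (hψ : ψ ≤ (1 / 2 - β) / (3 / 2 - β))
    (x : Fin d → ℝ) (hx : Mnorm (H xstar) (x - xstar) ≤ ν * lmin ^ ((3 : ℝ) / 2) / L)
    (Ht : Matrix (Fin d) (Fin d) ℝ) (hHtsym : Ht.IsSymm)
    (hHt1 : (Ht - (1 - ψ) • H x).PosSemidef)
    (hHt2 : ((1 + ψ) • H x - Ht).PosSemidef) :
    Mnorm (H xstar) (x + -(Ht⁻¹.mulVec (g x)) - xstar) ≤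
      3 * ((L / lmin ^ ((3 : ℝ) / 2)) * Mnorm (H xstar) (x - xstar) ^ 2 +
        specNorm (1 - ((hpsd x).sqrt)⁻¹ * Ht * ((hpsd x).sqrt)⁻¹) *
          Mnorm (H xstar) (x - xstar)) := by
  classical
  have hgstar : g xstar = 0 := gstar_zero f g hf hgrad xstar hmin
  set A := H x with hA
  set e : Fin d → ℝ := x - xstar with he
  set r := Mnorm (H xstar) e with hr
  have hApsd : A.PosSemidef := hpsd x
  have hApd : A.PosDef := posdef_of_lower hlmin (hlow x)
  -- numeric bounds on ψ, ν
  have hψ13 : ψ ≤ 1 / 3 := hψ.trans (by rw [div_le_iff₀ (by linarith)]; linarith)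
  have hν13 : ν ≤ 1 / 3 := by linarith
  have h1ψ : (0 : ℝ) < 1 - ψ := by linarith
  -- square root S of A and its inverse
  set S := (hpsd x).sqrt with hS
  have hSherm : Sᴴ = S := (hpsd x).posSemidef_sqrt.1
  have hSS : S * S = A := (hpsd x).sqrt_mul_self
  have hdetA : A.det ≠ 0 := hApd.det_pos.ne'
  have hdetS : S.det ≠ 0 := by
    intro h0; apply hdetA; rw [← hSS, Matrix.det_mul, h0, mul_zero]
  have hSiS : S⁻¹ * S = 1 := Matrix.nonsing_inv_mul S (isUnit_iff_ne_zero.mpr hdetS)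
  have hSSi : S * S⁻¹ = 1 := Matrix.mul_nonsing_inv S (isUnit_iff_ne_zero.mpr hdetS)
  set Si := S⁻¹ with hSi
  have hSiherm : Siᴴ = Si := by rw [hSi, Matrix.conjTranspose_nonsing_inv, hSherm]
  -- Ht is positive definite
  have hHtherm : Htᴴ = Ht := herm_of_isSymm hHtsym
  have hHtlow : (Ht - ((1 - ψ) * lmin) • (1 : Matrix (Fin d) (Fin d) ℝ)).PosSemidef := by
    apply psd_of_quad
    · rw [Matrix.conjTranspose_sub, hHtherm]
      congr 1
      simp
    · intro v
      rw [quad_sub, quad_smul_one]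
      have q1 := dot_le_of_psd hHt1 v
      rw [quad_smul] at q1
      have q2 := quad_lower (hlow x) v
      nlinarith [mul_le_mul_of_nonneg_left q2 h1ψ.le]
  have hHtpd : Ht.PosDef := posdef_of_lower (by positivity) hHtlow
  have hdetHt : Ht.det ≠ 0 := hHtpd.det_pos.ne'
  have hHtiHt : Ht⁻¹ * Ht = 1 := Matrix.nonsing_inv_mul Ht (isUnit_iff_ne_zero.mpr hdetHt)
  have hHtHti : Ht * Ht⁻¹ = 1 := Matrix.mul_nonsing_inv Ht (isUnit_iff_ne_zero.mpr hdetHt)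
  -- the matrix M
  set M := Si * Ht * Si with hM
  have hMherm : Mᴴ = M := by
    rw [hM, Matrix.conjTranspose_mul, Matrix.conjTranspose_mul, hSiherm, hHtherm, mul_assoc]
  have hMS : M * S = Si * Ht := by
    rw [hM, mul_assoc (Si * Ht) Si S, hSiS, mul_one]
  have hSiA : Si * A = S := by rw [← hSS, ← mul_assoc, hSiS, one_mul]
  have hMlow : (M - (1 - ψ) • (1 : Matrix (Fin d) (Fin d) ℝ)).PosSemidef := by
    apply psd_of_quad
    · rw [Matrix.conjTranspose_sub, hMherm]
      congr 1
      simp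
    · intro v
      rw [quad_sub, quad_smul_one]
      have hq : dotProduct v (M.mulVec v)
          = dotProduct (Si.mulVec v) (Ht.mulVec (Si.mulVec v)) := by
        rw [hM, ← Matrix.mulVec_mulVec, ← Matrix.mulVec_mulVec,
          symm_dot_mulVec hSiherm]
      have q1 := dot_le_of_psd hHt1 (Si.mulVec v)
      rw [quad_smul] at q1
      have q2 : dotProduct (Si.mulVec v) (A.mulVec (Si.mulVec v)) = vnorm v ^ 2 := by
        have h6 : Mnorm A (Si.mulVec v) = vnorm (S.mulVec (Si.mulVec v)) :=
          Mnorm_eq_vnorm_sqrt (hpsd x) _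
        rw [Matrix.mulVec_mulVec, hSSi, Matrix.one_mulVec] at h6
        rw [← Mnorm_sq hApsd, h6]
      rw [q2] at q1
      rw [hq]
      nlinarith [q1]
  have hMright : M * (S * Ht⁻¹ * S) = 1 := by
    have e1 : M * (S * Ht⁻¹ * S) = (M * S) * (Ht⁻¹ * S) := by noncomm_ring
    rw [e1, hMS]
    have e2 : Si * Ht * (Ht⁻¹ * S) = Si * (Ht * Ht⁻¹) * S := by noncomm_ring
    rw [e2, hHtHti, mul_one, hSiS]
  have hMinv : M⁻¹ = S * Ht⁻¹ * S := Matrix.inv_eq_right_inv hMright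
  have hMMi : M * M⁻¹ = 1 := by rw [hMinv]; exact hMright
  -- vectors
  set t : Fin d → ℝ := x + -(Ht⁻¹.mulVec (g x)) - xstar with ht
  set u : Fin d → ℝ := Ht.mulVec e - g x with hu
  have htu : t = Ht⁻¹.mulVec u := by
    rw [hu, Matrix.mulVec_sub, Matrix.mulVec_mulVec, hHtiHt, Matrix.one_mulVec, ht, he]
    funext i
    simp
    ring
  have hSt : S.mulVec t = M⁻¹.mulVec (Si.mulVec u) := by
    have hr1 : (S * Ht⁻¹ * S) * Si = S * Ht⁻¹ := by
      rw [mul_assoc (S * Ht⁻¹) S Si, hSSi, mul_one]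
    rw [htu, Matrix.mulVec_mulVec, Matrix.mulVec_mulVec, hMinv, hr1]
  have hSiu : Si.mulVec u
      = (M - 1).mulVec (S.mulVec e) + Si.mulVec (A.mulVec e - g x) := by
    rw [hu]
    have e1 : Si.mulVec (Ht.mulVec e - g x) = (Si * Ht).mulVec e - Si.mulVec (g x) := by
      rw [Matrix.mulVec_sub, Matrix.mulVec_mulVec]
    have e2 : (M - 1).mulVec (S.mulVec e) = (Si * Ht).mulVec e - S.mulVec e := by
      rw [Matrix.mulVec_mulVec, Matrix.sub_mul, hMS, one_mul, Matrix.sub_mulVec]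
    have e3 : Si.mulVec (A.mulVec e - g x) = S.mulVec e - Si.mulVec (g x) := by
      rw [Matrix.mulVec_sub, Matrix.mulVec_mulVec, hSiA]
    rw [e1, e2, e3]
    abel
  -- epsilon
  set ε := L * vnorm e / lmin with hε
  have hε0 : 0 ≤ ε := div_nonneg (mul_nonneg hL.le (vnorm_nonneg _)) hlmin.le
  -- comparisons between Mnorm A and Mnorm H*
  have hLip1 : specNorm (H xstar - A) ≤ L * vnorm e := by
    have h7 := hLip xstar x
    rw [vnorm_sub_rev, ← he] at h7
    exact h7
  have hLip2 : specNorm (A - H xstar) ≤ L * vnorm e := by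
    have h7 := hLip x xstar
    rw [← he] at h7
    exact h7
  have hcmp1 : ∀ z, Mnorm (H xstar) z ^ 2 ≤ (1 + ε) * Mnorm A z ^ 2 := fun z =>
    Mnorm_sq_le_close hlmin (mul_nonneg hL.le (vnorm_nonneg _)) hApsd (hpsd xstar)
      (hlow x) hLip1 z
  have hcmp2 : ∀ z, Mnorm A z ^ 2 ≤ (1 + ε) * Mnorm (H xstar) z ^ 2 := fun z =>
    Mnorm_sq_le_close hlmin (mul_nonneg hL.le (vnorm_nonneg _)) (hpsd xstar) hApsd
      (hlow xstar) hLip2 z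
  have hsq1ε : (0:ℝ) ≤ 1 + ε := by linarith
  have hsqrt1 : ∀ z, Mnorm (H xstar) z ≤ Real.sqrt (1 + ε) * Mnorm A z := by
    intro z
    have h8 := Real.sqrt_le_sqrt (hcmp1 z)
    rwa [Real.sqrt_sq (Mnorm_nonneg _ _), Real.sqrt_mul hsq1ε, Real.sqrt_sq (Mnorm_nonneg _ _)]
      at h8
  have hsqrt2 : ∀ z, Mnorm A z ≤ Real.sqrt (1 + ε) * Mnorm (H xstar) z := by
    intro z
    have h8 := Real.sqrt_le_sqrt (hcmp2 z)
    rwa [Real.sqrt_sq (Mnorm_nonneg _ _), Real.sqrt_mul hsq1ε, Real.sqrt_sq (Mnorm_nonneg _ _)]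
      at h8
  -- lower bounds / inverse bounds
  have hMlower := vnorm_mulVec_lower h1ψ.le hMlow
  have hMinvBound : vnorm (M⁻¹.mulVec (Si.mulVec u)) ≤ vnorm (Si.mulVec u) / (1 - ψ) := by
    have h9 := hMlower (M⁻¹.mulVec (Si.mulVec u))
    have hz : M.mulVec (M⁻¹.mulVec (Si.mulVec u)) = Si.mulVec u := by
      rw [Matrix.mulVec_mulVec, hMMi, Matrix.one_mulVec]
    rw [hz] at h9
    rw [le_div_iff₀ h1ψ]
    linarith
  have sqlem : ∀ (B : Matrix (Fin d) (Fin d) ℝ),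
      (B - lmin • (1 : Matrix (Fin d) (Fin d) ℝ)).PosSemidef →
      ∀ z, Real.sqrt lmin * vnorm z ≤ Mnorm B z := by
    intro B hB z
    have h10 := quad_lower hB z
    calc Real.sqrt lmin * vnorm z = Real.sqrt (lmin * vnorm z ^ 2) := by
          rw [Real.sqrt_mul hlmin.le, Real.sqrt_sq (vnorm_nonneg z)]
      _ ≤ Mnorm B z := Real.sqrt_le_sqrt h10
  have hSinv : ∀ w', Real.sqrt lmin * vnorm (Si.mulVec w') ≤ vnorm w' := by
    intro w'
    have h11 := sqlem A (hlow x) (Si.mulVec w')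
    have h12 : Mnorm A (Si.mulVec w') = vnorm (S.mulVec (Si.mulVec w')) :=
      Mnorm_eq_vnorm_sqrt (hpsd x) _
    rw [Matrix.mulVec_mulVec, hSSi, Matrix.one_mulVec] at h12
    rw [h12] at h11
    exact h11
  have hsl : (0:ℝ) < Real.sqrt lmin := Real.sqrt_pos.mpr hlmin
  have hsl2 : Real.sqrt lmin * Real.sqrt lmin = lmin := Real.mul_self_sqrt hlmin.le
  have h32 : lmin ^ ((3 : ℝ) / 2) = lmin * Real.sqrt lmin := by
    rw [show (3 : ℝ) / 2 = 1 + 1 / 2 by norm_num, Real.rpow_add hlmin, Real.rpow_one,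
      ← Real.sqrt_eq_rpow]
  -- epsilon is at most nu
  have hve : Real.sqrt lmin * vnorm e ≤ r := sqlem (H xstar) (hlow xstar) e
  have hεν : ε ≤ ν := by
    rw [hε, div_le_iff₀ hlmin]
    have k2 : L * r ≤ ν * lmin ^ ((3 : ℝ) / 2) := by
      have := (le_div_iff₀ hL).mp hx
      linarith
    rw [h32] at k2
    have k1 : L * (Real.sqrt lmin * vnorm e) ≤ L * r :=
      mul_le_mul_of_nonneg_left hve hL.le
    nlinarith
  have hε13 : ε ≤ 1 / 3 := hεν.trans hν13
  -- gradient Taylor bound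
  have hgt : vnorm (A.mulVec e - g x) ≤ L * vnorm e ^ 2 := by
    have := grad_taylor f g H L hL.le hf hgrad hhess hHsym hLip xstar x hgstar
    rw [← he, ← hA] at this
    rwa [vnorm_sub_rev] at this
  -- rho
  set ρ := specNorm (1 - M) with hρ
  have hρ0 : 0 ≤ ρ := specNorm_nonneg _
  have hr0 : 0 ≤ r := Mnorm_nonneg _ _
  -- step 6
  have hc4 : vnorm (Si.mulVec u) ≤ ρ * vnorm (S.mulVec e) + vnorm (Si.mulVec (A.mulVec e - g x)) := by
    rw [hSiu]
    refine (vnorm_add_le _ _).trans (add_le_add ?_ le_rfl)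
    have h16 := vnorm_mulVec_le (M - 1) (S.mulVec e)
    have hspec : specNorm (M - 1) = ρ := by
      rw [show M - 1 = -(1 - M) from (neg_sub 1 M).symm, specNorm_neg, ← hρ]
    rwa [hspec] at h16
  have hc5 : vnorm (S.mulVec e) ≤ Real.sqrt (1 + ε) * r := by
    have h13 : vnorm (S.mulVec e) = Mnorm A e := (Mnorm_eq_vnorm_sqrt (hpsd x) e).symm
    rw [h13, hr]
    exact hsqrt2 e
  -- quantities
  set q := vnorm (Si.mulVec (A.mulVec e - g x)) with hq
  have hq0 : 0 ≤ q := vnorm_nonneg _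
  have hqb : Real.sqrt lmin * q ≤ L * vnorm e ^ 2 := (hSinv _).trans hgt
  set σ := Real.sqrt (1 + ε) with hσ
  have hσ1 : 1 ≤ σ := by
    have h15 := Real.sqrt_le_sqrt (show (1:ℝ) ≤ 1 + ε by linarith)
    rwa [Real.sqrt_one] at h15
  have hσ2 : σ * σ = 1 + ε := Real.mul_self_sqrt hsq1ε
  have hσle : σ ≤ 1 + ε := by
    calc σ = 1 * σ := (one_mul σ).symm
      _ ≤ σ * σ := mul_le_mul_of_nonneg_right hσ1 (by linarith)
      _ = 1 + ε := hσ2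
  -- main chain
  have main1 : Mnorm (H xstar) t ≤ σ * (vnorm (Si.mulVec u) / (1 - ψ)) := by
    refine (hsqrt1 t).trans ?_
    have h14 : Mnorm A t = vnorm (M⁻¹.mulVec (Si.mulVec u)) := by
      rw [Mnorm_eq_vnorm_sqrt (hpsd x) t, ← hS, hSt]
    rw [h14]
    exact mul_le_mul_of_nonneg_left hMinvBound (by linarith)
  have main2 : vnorm (Si.mulVec u) ≤ ρ * (σ * r) + q := by
    refine hc4.trans ?_
    exact add_le_add (mul_le_mul_of_nonneg_left hc5 hρ0) le_rfl
  -- bound q by Q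
  have hveb : vnorm e * Real.sqrt lmin ≤ r := by linarith [hve]
  have hQ : q ≤ (L / lmin ^ ((3 : ℝ) / 2)) * r ^ 2 := by
    rw [h32]
    rw [div_mul_eq_mul_div, le_div_iff₀ (by positivity)]
    -- q * (lmin * √lmin) ≤ L * r^2
    have k3 : Real.sqrt lmin * q * lmin ≤ L * vnorm e ^ 2 * lmin :=
      mul_le_mul_of_nonneg_right hqb hlmin.le
    have h17 : (vnorm e * Real.sqrt lmin) * (vnorm e * Real.sqrt lmin) ≤ r * r :=
      mul_self_le_mul_self (mul_nonneg (vnorm_nonneg e) hsl.le) hveb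
    have k4 : vnorm e ^ 2 * lmin ≤ r ^ 2 := by
      calc vnorm e ^ 2 * lmin = (vnorm e * Real.sqrt lmin) * (vnorm e * Real.sqrt lmin) := by
            linear_combination (vnorm e ^ 2) * hsl2.symm
        _ ≤ r * r := h17
        _ = r ^ 2 := (sq r).symm
    have k5 : L * (vnorm e ^ 2 * lmin) ≤ L * r ^ 2 := mul_le_mul_of_nonneg_left k4 hL.le
    calc q * (lmin * Real.sqrt lmin) = Real.sqrt lmin * q * lmin := by ring
      _ ≤ L * vnorm e ^ 2 * lmin := k3
      _ = L * (vnorm e ^ 2 * lmin) := by ring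
      _ ≤ L * r ^ 2 := k5
  -- final numeric assembly
  set Q := (L / lmin ^ ((3 : ℝ) / 2)) * r ^ 2 with hQdef
  have hl32pos : (0:ℝ) < lmin ^ ((3 : ℝ) / 2) := by rw [h32]; positivity
  have hQ0 : 0 ≤ Q := by
    rw [hQdef]
    positivity
  have hσ0 : (0:ℝ) ≤ σ := by linarith
  set X := ρ * (σ * r) + q with hX
  have hX0 : 0 ≤ X := by
    have : 0 ≤ ρ * (σ * r) := mul_nonneg hρ0 (mul_nonneg hσ0 hr0)
    linarith
  have c1 : Mnorm (H xstar) t ≤ σ * (X / (1 - ψ)) :=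
    main1.trans (mul_le_mul_of_nonneg_left ((div_le_div_iff_of_pos_right h1ψ).mpr main2) hσ0)
  have b1 : σ * X ≤ (4 / 3) * (ρ * r + Q) := by
    have hb : σ * X = ρ * r * (σ * σ) + σ * q := by rw [hX]; ring
    rw [hb, hσ2]
    have t1 : ρ * r * (1 + ε) ≤ ρ * r * (4 / 3) :=
      mul_le_mul_of_nonneg_left (by linarith) (mul_nonneg hρ0 hr0)
    have t2 : σ * q ≤ (4 / 3) * q := mul_le_mul_of_nonneg_right (by linarith) hq0
    have t3 : (4 / 3 : ℝ) * q ≤ (4 / 3) * Q :=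
      mul_le_mul_of_nonneg_left hQ (by norm_num)
    linarith
  have b2 : Mnorm (H xstar) t ≤ (σ * X) / (1 - ψ) := by
    rw [mul_div_assoc]
    exact c1
  have b3 : (σ * X) / (1 - ψ) ≤ (σ * X) / (2 / 3) :=
    div_le_div_of_nonneg_left (mul_nonneg hσ0 hX0) (by norm_num) (by linarith)
  have b4 : (σ * X) / (2 / 3 : ℝ) = (3 / 2) * (σ * X) := by ring
  have b5 : (3 / 2 : ℝ) * (σ * X) ≤ (3 / 2) * ((4 / 3) * (ρ * r + Q)) :=
    mul_le_mul_of_nonneg_left b1 (by norm_num)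
  have hρr : 0 ≤ ρ * r := mul_nonneg hρ0 hr0
  calc Mnorm (H xstar) t ≤ (σ * X) / (1 - ψ) := b2
    _ ≤ (σ * X) / (2 / 3) := b3
    _ = (3 / 2) * (σ * X) := b4
    _ ≤ (3 / 2) * ((4 / 3) * (ρ * r + Q)) := b5
    _ = 2 * (ρ * r + Q) := by ring
    _ ≤ 3 * (Q + ρ * r) := by linarith
end

section
/- Let w : ℝ → ℝ be twice differentiable with w(-1) = 0, w(t) > 0 for all t ≥ 0, w'(-1) ≥ 0, w''(t) ≥ 0 for all t ≥ -1, and w(t+1)/w(t) ∨ w'(t+1)/w'(t) ≤ Ψ for all t ≥ 0 with Ψ ≥ 1. For an integer t ≥ 0 define z_{i,t} = (w(i) - w(i-1))/w(t) for i = 0,1,…,t. Then Σ_{i=0}^t z_{i,t}² ≤ Ψ²·w'(t)/w(t) and max_{0≤i≤t} z_{i,t} ≤ w'(t)/w(t). -/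
open Real
open scoped BigOperators

/-- deterministic weight bounds for a weight function `w` satisfying
Assumption 5: `Σ z_{i,t}² ≤ Ψ²·w'(t)/w(t)` and `max_i z_{i,t} ≤ w'(t)/w(t)`. -/
theorem stmt12
    (w : ℝ → ℝ) (Ψ : ℝ) (hΨ : 1 ≤ Ψ)
    (hw1 : Differentiable ℝ w) (hw2 : Differentiable ℝ (deriv w))
    (hwneg1 : w (-1) = 0) (hwpos : ∀ s : ℝ, 0 ≤ s → 0 < w s)
    (hw'neg1 : 0 ≤ deriv w (-1)) (hw'' : ∀ s : ℝ, -1 ≤ s → 0 ≤ deriv (deriv w) s)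
    (hratio : ∀ s : ℝ, 0 ≤ s →
      max (w (s + 1) / w s) (deriv w (s + 1) / deriv w s) ≤ Ψ)
    (t : ℕ) :
    (∑ i ∈ Finset.range (t + 1), ((w i - w ((i : ℝ) - 1)) / w t) ^ 2 ≤
        Ψ ^ 2 * deriv w t / w t) ∧
    ((Finset.range (t + 1)).sup' (Finset.nonempty_range_iff.mpr t.succ_ne_zero)
        (fun i => (w i - w ((i : ℝ) - 1)) / w t) ≤ deriv w t / w t) := by
  have hwt : 0 < w t := hwpos t (Nat.cast_nonneg t)
  -- deriv w is monotone on [-1, ∞)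
  have hd'mono : MonotoneOn (deriv w) (Set.Ici (-1 : ℝ)) := by
    apply monotoneOn_of_deriv_nonneg (convex_Ici _) hw2.continuous.continuousOn
      (hw2.differentiableOn)
    intro x hx
    rw [interior_Ici] at hx
    exact hw'' x (le_of_lt hx)
  have hw'nn : ∀ s : ℝ, -1 ≤ s → 0 ≤ deriv w s := fun s hs =>
    hw'neg1.trans (hd'mono Set.self_mem_Ici hs hs)
  have hw't : 0 ≤ deriv w t := hw'nn t (le_trans (by norm_num) (Nat.cast_nonneg t))
  -- each increment is between 0 and deriv w t
  have hbound : ∀ i : ℕ, i ≤ t → 0 ≤ w i - w ((i : ℝ) - 1) ∧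
      w i - w ((i : ℝ) - 1) ≤ deriv w t := by
    intro i hi
    have hlt : (i : ℝ) - 1 < i := by linarith
    obtain ⟨c, hc, hcd⟩ := exists_deriv_eq_slope w hlt hw1.continuous.continuousOn
      hw1.differentiableOn
    have hval : w i - w ((i : ℝ) - 1) = deriv w c := by
      rw [hcd]; field_simp; ring
    have hc1 : (-1 : ℝ) ≤ c := by
      have : (0 : ℝ) ≤ i := Nat.cast_nonneg i
      have := hc.1; linarith
    have hct : c ≤ (t : ℝ) := by
      have : (i : ℝ) ≤ t := Nat.cast_le.mpr hi
      have := hc.2; linarith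
    constructor
    · rw [hval]; exact hw'nn c hc1
    · rw [hval]; exact hd'mono (Set.mem_Ici.mpr hc1) (Set.mem_Ici.mpr (by linarith)) hct
  -- telescoping sum
  have htel : ∑ i ∈ Finset.range (t + 1), (w i - w ((i : ℝ) - 1)) = w t := by
    have h := Finset.sum_range_sub (fun n : ℕ => w ((n : ℝ) - 1)) (t + 1)
    have heq : ∀ i ∈ Finset.range (t + 1),
        (w i - w ((i : ℝ) - 1)) = w (((i + 1 : ℕ) : ℝ) - 1) - w ((i : ℝ) - 1) := by
      intro i _; push_cast; ring_nf
    rw [Finset.sum_congr rfl heq, h]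
    push_cast
    simp [hwneg1]
  constructor
  · calc ∑ i ∈ Finset.range (t + 1), ((w i - w ((i : ℝ) - 1)) / w t) ^ 2
        ≤ ∑ i ∈ Finset.range (t + 1), deriv w t * (w i - w ((i : ℝ) - 1)) / w t ^ 2 := by
          apply Finset.sum_le_sum
          intro i hi
          obtain ⟨h0, h1⟩ := hbound i (Nat.lt_succ_iff.mp (Finset.mem_range.mp hi))
          rw [div_pow]
          apply div_le_div_of_nonneg_right ?_ (by positivity)
          nlinarith
      _ = deriv w t * w t / w t ^ 2 := by
          rw [← Finset.sum_div, ← Finset.mul_sum, htel]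
      _ = deriv w t / w t := by field_simp
      _ ≤ Ψ ^ 2 * deriv w t / w t := by
          apply div_le_div_of_nonneg_right ?_ hwt.le
          nlinarith [mul_le_mul hΨ hΨ zero_le_one (le_trans zero_le_one hΨ), hw't]
  · apply Finset.sup'_le
    intro i hi
    obtain ⟨h0, h1⟩ := hbound i (Nat.lt_succ_iff.mp (Finset.mem_range.mp hi))
    exact div_le_div_of_nonneg_right h1 hwt.le |>.trans_eq rfl
end
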